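/- Let I be an open real interval, a a real constant, and f, g : I → ℝ twice differentiable with f(u) > 0, f'(u)² + g'(u)² = 1 and g'(u) > 0 for all u ∈ I. If 1 − f'(u)² − f(u)·f''(u) = a·g'(u) for all u ∈ I, then the function u ↦ f(u)·g'(u) has derivative a·f'(u); consequently there is a constant c with f(u)·g'(u) = a·f(u) + c for all u ∈ I, and hence f'(u)² = ((1 − a²)·f(u)² − 2ac·f(u) − c²)/f(u)² for all u ∈ I. (This is case (ii) of the classification of meridian surfaces with parallel normal bundle: the condition g' + f·κ_m = a gives the first integral f·g' = a·f + c.) -/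

import Mathlib

/-- Case (ii) of the classification of meridian surfaces with parallel normal bundle:
if `1 − f'² − f·f'' = a·g'` on `I`, then `(f·g')' = a·f'`, so `f·g' = a·f + c` for
some constant `c`, whence `f'² = ((1 − a²)f² − 2acf − c²)/f²`. -/
theorem parallel_case_ii_first_integral
    (I : Set ℝ) (hI : IsOpen I) (hIc : I.OrdConnected)
    (a : ℝ) (f g : ℝ → ℝ)
    (hf1 : ∀ u ∈ I, DifferentiableAt ℝ f u)
    (hf2 : ∀ u ∈ I, DifferentiableAt ℝ (deriv f) u)
    (hg1 : ∀ u ∈ I, DifferentiableAt ℝ g u)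
    (hg2 : ∀ u ∈ I, DifferentiableAt ℝ (deriv g) u)
    (hfpos : ∀ u ∈ I, 0 < f u)
    (hunit : ∀ u ∈ I, (deriv f u) ^ 2 + (deriv g u) ^ 2 = 1)
    (hg' : ∀ u ∈ I, 0 < deriv g u)
    (hode : ∀ u ∈ I, 1 - (deriv f u) ^ 2 - f u * deriv (deriv f) u = a * deriv g u) :
    (∀ u ∈ I, HasDerivAt (fun x => f x * deriv g x) (a * deriv f u) u) ∧
    ∃ c : ℝ, (∀ u ∈ I, f u * deriv g u = a * f u + c) ∧
      ∀ u ∈ I, (deriv f u) ^ 2 =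
        ((1 - a ^ 2) * (f u) ^ 2 - 2 * a * c * f u - c ^ 2) / (f u) ^ 2 := by
  have hmain : ∀ u ∈ I, HasDerivAt (fun x => f x * deriv g x) (a * deriv f u) u := by
    intro u hu
    have hf := (hf1 u hu).hasDerivAt
    have hg2' := (hg2 u hu).hasDerivAt
    have hprod := hf.mul hg2'
    -- derivative of unit relation is zero
    have hsum : HasDerivAt (fun x => (deriv f x) ^ 2 + (deriv g x) ^ 2)
        ((2 * deriv f u ^ 1) * deriv (deriv f) u + (2 * deriv g u ^ 1) * deriv (deriv g) u) u := by
      have h1 := ((hf2 u hu).hasDerivAt).pow 2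
      have h2 := ((hg2 u hu).hasDerivAt).pow 2
      exact (h1.add h2).congr_deriv (by simp)
    have hzero : HasDerivAt (fun x => (deriv f x) ^ 2 + (deriv g x) ^ 2) 0 u := by
      have heq : (fun x => (deriv f x) ^ 2 + (deriv g x) ^ 2) =ᶠ[nhds u] fun _ => (1 : ℝ) := by
        filter_upwards [hI.mem_nhds hu] with x hx using hunit x hx
      exact (hasDerivAt_const u (1 : ℝ)).congr_of_eventuallyEq heq
    have huniq := hsum.unique hzero
    have hgpos := hg' u hu
    have hode' := hode u hu
    have hval : deriv f u * deriv g u + f u * deriv (deriv g) u = a * deriv f u := by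
      have hgne : deriv g u ≠ 0 := ne_of_gt hgpos
      have hunit' := hunit u hu
      simp only [pow_one] at huniq
      have : deriv g u * (deriv f u * deriv g u + f u * deriv (deriv g) u)
          = deriv g u * (a * deriv f u) := by
        linear_combination (f u / 2) * huniq + deriv f u * hode' + deriv f u * hunit'
      exact mul_left_cancel₀ hgne this
    exact hprod.congr_deriv hval
  refine ⟨hmain, ?_⟩
  rcases Set.eq_empty_or_nonempty I with hIe | ⟨u₀, hu₀⟩
  · exact ⟨0, fun u hu => absurd hu (hIe ▸ Set.notMem_empty u),
      fun u hu => absurd hu (hIe ▸ Set.notMem_empty u)⟩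
  set φ : ℝ → ℝ := fun x => f x * deriv g x - a * f x with hφ
  have hφd : ∀ u ∈ I, HasDerivAt φ 0 u := by
    intro u hu
    have := (hmain u hu).sub ((hf1 u hu).hasDerivAt.const_mul a)
    exact this.congr_deriv (by ring)
  have hconst : ∀ u ∈ I, φ u = φ u₀ := by
    intro u hu
    refine hIc.convex.is_const_of_fderivWithin_eq_zero (fun x hx => ((hφd x hx).differentiableAt).differentiableWithinAt) ?_ hu hu₀
    intro x hx
    rw [fderivWithin_of_isOpen hI hx, (hφd x hx).hasFDerivAt.fderiv]
    ext; simp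
  refine ⟨φ u₀, fun u hu => by
    have := hconst u hu; simp only [hφ] at this ⊢; linarith, ?_⟩
  intro u hu
  have h1 : f u * deriv g u = a * f u + φ u₀ := by
    have := hconst u hu; simp only [hφ] at this ⊢; linarith
  have hfne : (f u) ≠ 0 := ne_of_gt (hfpos u hu)
  have hunit' := hunit u hu
  field_simp
  linear_combination (f u) ^ 2 * hunit' - (f u * deriv g u + a * f u + φ u₀) * h1
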